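/- Suppose that for every ultrametric space X there is given a bijective isometry k_X : (I_ω(X), d̂) → (J_ω(X), d̂) such that J_ω(f) ∘ k_X = k_Y ∘ I_ω(f) for every nonexpanding map f : X → Y between ultrametric spaces. Then there exists an order-preserving bijection α : [−∞,0] → [−∞,+∞] such that for every ultrametric space X and every ∨_i t_i ⊙ δ_{x_i} ∈ I_ω(X) one has k_X(∨_i t_i ⊙ δ_{x_i}) = ∨_i α(t_i) ∧ δ_{x_i}. -/

import Mathlib

open scoped ENNReal

noncomputable section

/-- A metric is an *ultrametric* if the strong triangle inequality holds. -/
def IsUltra (X : Type*) [MetricSpace X] : Prop :=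
  ∀ x y z : X, dist x y ≤ max (dist x z) (dist z y)

/-- `mmOf x α` is the max-min functional `∨ᵢ αᵢ ∧ δ_{x i}`,
`φ ↦ maxᵢ min (α i) (φ (x i))` (computed in the extended reals). -/
def mmOf {A : Type*} {n : ℕ} (x : Fin (n + 1) → A) (α : Fin (n + 1) → EReal) :
    (A → ℝ) → ℝ :=
  fun φ => (⨆ i, min (α i) ((φ (x i) : EReal))).toReal

/-- `μ` is a max-min measure of finite support, with support contained in `S`. -/
def IsMMOn {A : Type*} (S : Set A) (μ : (A → ℝ) → ℝ) : Prop :=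
  ∃ (n : ℕ) (x : Fin (n + 1) → A) (α : Fin (n + 1) → EReal),
    (∀ i, x i ∈ S) ∧ (∃ i, α i = ⊤) ∧ μ = mmOf x α

/-- `μ` is a max-min measure of finite support. -/
def IsMM {A : Type*} (μ : (A → ℝ) → ℝ) : Prop :=
  IsMMOn Set.univ μ

/-- `idemOf x α` is the idempotent measure `∨ᵢ αᵢ ⊙ δ_{x i}`,
`φ ↦ maxᵢ (α i + φ (x i))` (computed in the extended reals). -/
def idemOf {A : Type*} {n : ℕ} (x : Fin (n + 1) → A) (α : Fin (n + 1) → EReal) :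
    (A → ℝ) → ℝ :=
  fun φ => (⨆ i, (α i + (φ (x i) : EReal))).toReal

/-- `μ` is an idempotent measure of finite support, with support contained in `S`. -/
def IsIdemOn {A : Type*} (S : Set A) (μ : (A → ℝ) → ℝ) : Prop :=
  ∃ (n : ℕ) (x : Fin (n + 1) → A) (α : Fin (n + 1) → EReal),
    (∀ i, x i ∈ S) ∧ (∀ i, α i ≤ 0) ∧ (∃ i, α i = 0) ∧ μ = idemOf x α

/-- `μ` is an idempotent measure of finite support. -/
def IsIdem {A : Type*} (μ : (A → ℝ) → ℝ) : Prop :=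
  IsIdemOn Set.univ μ

/-- The Dirac measure `δ_a`. -/
def dirac {A : Type*} (a : A) : (A → ℝ) → ℝ := fun φ => φ a

/-- `FrE e r φ`: the function `φ` is constant on every open `r`-ball of the
(extended-valued) distance `e`; this is the family `𝓕_r`. -/
def FrE {A : Type*} (e : A → A → ℝ≥0∞) (r : ℝ≥0∞) (φ : A → ℝ) : Prop :=
  ∀ x y : A, e x y < r → φ x = φ y

/-- The ultrametric `d̂` on functionals:
`d̂(μ,ν) = inf {r > 0 ∣ μ φ = ν φ for every φ ∈ 𝓕_r}`. -/
def dHatE {A : Type*} (e : A → A → ℝ≥0∞) (μ ν : (A → ℝ) → ℝ) : ℝ≥0∞ :=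
  sInf {r : ℝ≥0∞ | 0 < r ∧ ∀ φ : A → ℝ, FrE e r φ → μ φ = ν φ}

/-- The pushforward `J_ω(f)` of functionals along `f`. -/
def Jmap {A B : Type*} (f : A → B) (μ : (A → ℝ) → ℝ) : (B → ℝ) → ℝ :=
  fun φ => μ (φ ∘ f)

/-- The extended distance of a metric space, as a two-variable function. -/
def eD (X : Type*) [PseudoEMetricSpace X] : X → X → ℝ≥0∞ :=
  fun x y => edist x y

/-- The monad multiplication (`ξ` for max-min measures, `ζ` for idempotent
measures): `mult M φ = M (μ ↦ μ φ)`. -/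
def mult {A : Type*} (M : (((A → ℝ) → ℝ) → ℝ) → ℝ) : (A → ℝ) → ℝ :=
  fun φ => M fun μ => μ φ

/-! ### Auxiliary development -/

namespace Galpha

lemma exists_iSup_eq {ι : Type*} [Finite ι] [Nonempty ι] (g : ι → EReal) :
    ∃ i, (⨆ j, g j) = g i := by
  obtain ⟨i, hi⟩ := Finite.exists_max g
  exact ⟨i, le_antisymm (iSup_le hi) (le_iSup g i)⟩

lemma min_iSup {ι : Type*} [Finite ι] [Nonempty ι] (g : ι → EReal) (c : EReal) :
    min (⨆ i, g i) c = ⨆ i, min (g i) c := by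
  obtain ⟨i0, h⟩ := exists_iSup_eq g
  refine le_antisymm ?_ (iSup_le fun i => min_le_min (le_iSup g i) le_rfl)
  rw [h]
  exact le_iSup (fun i => min (g i) c) i0

lemma iSup_add_real {ι : Type*} [Finite ι] [Nonempty ι] (g : ι → EReal) (c : ℝ) :
    (⨆ i, g i) + (c : EReal) = ⨆ i, (g i + c) := by
  obtain ⟨i0, h⟩ := exists_iSup_eq g
  refine le_antisymm ?_ (iSup_le fun i => add_le_add (le_iSup g i) le_rfl)
  rw [h]
  exact le_iSup (fun i => g i + (c:EReal)) i0

/-- fiber sup of coefficients -/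
def fib {A : Type*} [DecidableEq A] {m : ℕ} (y : Fin (m + 1) → A) (β : Fin (m + 1) → EReal)
    (p : A) : EReal :=
  ⨆ i, if y i = p then β i else ⊥

/-- test function -/
def tf {A : Type*} [DecidableEq A] (p : A) (M : ℝ) : A → ℝ := fun q => if q = p then M else -M

lemma fib_le {A : Type*} [DecidableEq A] {m : ℕ} (y : Fin (m+1) → A) (β : Fin (m+1) → EReal)
    (p : A) (c : EReal) (h : ∀ i, β i ≤ c) : fib y β p ≤ c := by
  refine iSup_le fun i => ?_
  by_cases hy : y i = p
  · simpa [hy] using h i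
  · simp [hy]

lemma le_fib {A : Type*} [DecidableEq A] {m : ℕ} (y : Fin (m+1) → A) (β : Fin (m+1) → EReal)
    (i : Fin (m+1)) : β i ≤ fib y β (y i) :=
  le_trans (by simp) (le_iSup (fun j => if y j = y i then β j else ⊥) i)

lemma fib_sup_compl {A : Type*} [DecidableEq A] {m : ℕ} (y : Fin (m+1) → A)
    (β : Fin (m+1) → EReal) (p : A) :
    fib y β p ⊔ (⨆ i, if y i = p then ⊥ else β i) = ⨆ i, β i := by
  rw [fib, ← iSup_sup_eq]
  refine iSup_congr fun i => ?_
  by_cases hy : y i = p <;> simp [hy]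

lemma iSup_eq_top_of_exists {ι : Type*} (g : ι → EReal) (h : ∃ i, g i = ⊤) : (⨆ i, g i) = ⊤ := by
  obtain ⟨i, hi⟩ := h
  exact top_le_iff.mp (hi ▸ le_iSup g i)

lemma iSup_single {m : ℕ} (g : Fin (m+1) → EReal) (p : Fin (m+1)) :
    (⨆ j, if j = p then g j else ⊥) = g p := by
  refine le_antisymm (iSup_le fun j => ?_) (le_trans (by simp) (le_iSup _ p))
  by_cases h : j = p
  · subst h; simp
  · simp [h]

lemma iSup_pair {m : ℕ} (g : Fin (m+1) → EReal) (p q : Fin (m+1)) :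
    (⨆ j, if (j = p ∨ j = q) then g j else ⊥) = g p ⊔ g q := by
  apply le_antisymm
  · refine iSup_le fun j => ?_
    split_ifs with h
    · rcases h with rfl | rfl
      exacts [le_sup_left, le_sup_right]
    · exact bot_le
  · refine sup_le ?_ ?_
    · exact le_trans (le_of_eq (if_pos (Or.inl rfl)).symm)
        (le_iSup (fun j => if (j = p ∨ j = q) then g j else ⊥) p)
    · exact le_trans (le_of_eq (if_pos (Or.inr rfl)).symm)
        (le_iSup (fun j => if (j = p ∨ j = q) then g j else ⊥) q)

lemma iSup_eq_c {ι : Type*} (g : ι → EReal) (c : EReal) (h1 : ∀ j, g j ≤ c)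
    (h2 : ∃ j, g j = c) : (⨆ j, g j) = c := by
  obtain ⟨j, hj⟩ := h2
  exact le_antisymm (iSup_le h1) (hj ▸ le_iSup g j)

/-- value of an mm measure on a test function -/
lemma mm_tf {A : Type*} [DecidableEq A] {m : ℕ} (y : Fin (m+1) → A) (β : Fin (m+1) → EReal)
    (htop : ∃ i, β i = ⊤) (p : A) (M : ℝ) (hM : 1 + |(fib y β p).toReal| ≤ M) :
    mmOf y β (tf p M) =
      if fib y β p = ⊤ then M else if fib y β p = ⊥ then -M else (fib y β p).toReal := by
  set B := fib y β p with hB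
  set C := ⨆ i, if y i = p then ⊥ else β i with hC
  have hM0 : (0:ℝ) < M := by
    have := abs_nonneg (B.toReal); linarith
  have key : (⨆ i, min (β i) ((tf p M (y i) : ℝ) : EReal))
      = max (min B (M:EReal)) (min C ((-M : ℝ) : EReal)) := by
    rw [hB, hC, fib, min_iSup, min_iSup, ← iSup_sup_eq]
    refine iSup_congr fun i => ?_
    by_cases hy : y i = p <;> simp [tf, hy]
  have hBC : B ⊔ C = ⊤ := by
    rw [hB, hC, fib_sup_compl]
    exact iSup_eq_top_of_exists β htop
  rw [mmOf, key]
  by_cases hT : B = ⊤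
  · have h2 : min C ((-M:ℝ):EReal) ≤ ((M:ℝ):EReal) := by
      refine le_trans (min_le_right _ _) ?_
      exact_mod_cast by linarith
    rw [hT, if_pos rfl]
    simp only [min_top_left] at *
    rw [max_eq_left h2]
    simp
  · by_cases hBot : B = ⊥
    · have hCt : C = ⊤ := by
        rw [hBot] at hBC; simpa using hBC
      rw [hBot, hCt]
      simp
    · have hreal : B = ((B.toReal : ℝ) : EReal) := (EReal.coe_toReal hT hBot).symm
      set b := B.toReal with hbdef
      have hb : |b| + 1 ≤ M := by linarith
      have h1 : min ((b:EReal)) (M:EReal) = (b:EReal) := by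
        refine min_eq_left ?_
        exact_mod_cast le_trans (le_abs_self b) (by linarith)
      have h2 : min C ((-M:ℝ):EReal) ≤ (b:EReal) := by
        refine le_trans (min_le_right _ _) ?_
        have hh : -M ≤ b := by have := neg_abs_le b; linarith
        exact_mod_cast hh
      rw [hreal, h1, max_eq_left h2]
      simp

/-- coefficients of an mm measure are determined by the functional -/
lemma detMM {A : Type*} [DecidableEq A] {m m' : ℕ} {y : Fin (m+1) → A} {β : Fin (m+1) → EReal}
    {y' : Fin (m'+1) → A} {β' : Fin (m'+1) → EReal}
    (ht : ∃ i, β i = ⊤) (ht' : ∃ i, β' i = ⊤)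
    (h : mmOf y β = mmOf y' β') (p : A) : fib y β p = fib y' β' p := by
  set B := fib y β p with hB
  set B' := fib y' β' p with hB'
  set M : ℝ := 1 + |B.toReal| + |B'.toReal| + 1 with hMdef
  have hM : 1 + |B.toReal| ≤ M := by have := abs_nonneg (B'.toReal); linarith
  have hM' : 1 + |B'.toReal| ≤ M := by have := abs_nonneg (B.toReal); linarith
  have hM1 : 1 + |B.toReal| ≤ M + 1 := by linarith
  have hM1' : 1 + |B'.toReal| ≤ M + 1 := by linarith
  have hMpos : (1:ℝ) ≤ M := by
    have := abs_nonneg (B.toReal); have := abs_nonneg (B'.toReal); linarith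
  have e1 := mm_tf y β ht p M hM
  have e1' := mm_tf y' β' ht' p M hM'
  have e2 := mm_tf y β ht p (M+1) hM1
  have e2' := mm_tf y' β' ht' p (M+1) hM1'
  rw [h] at e1 e2
  rw [e1'] at e1
  rw [e2'] at e2
  rw [← hB, ← hB'] at e1 e2
  clear e1' e2' h hM hM' hM1 hM1'
  by_cases c1 : B = ⊤ <;> by_cases c2 : B' = ⊤
  · rw [c1, c2]
  · exfalso
    rw [if_pos c1, if_neg c2] at e1 e2
    by_cases c3 : B' = ⊥
    · rw [if_pos c3] at e1 e2; linarith
    · rw [if_neg c3] at e1 e2; linarith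
  · exfalso
    rw [if_pos c2, if_neg c1] at e1 e2
    by_cases c3 : B = ⊥
    · rw [if_pos c3] at e1 e2; linarith
    · rw [if_neg c3] at e1 e2; linarith
  · rw [if_neg c1, if_neg c2] at e1 e2
    by_cases c3 : B = ⊥ <;> by_cases c4 : B' = ⊥
    · rw [c3, c4]
    · exfalso; rw [if_pos c3, if_neg c4] at e1 e2; linarith
    · exfalso; rw [if_pos c4, if_neg c3] at e1 e2; linarith
    · rw [if_neg c3, if_neg c4] at e1
      rw [← EReal.coe_toReal c1 c3, ← EReal.coe_toReal c2 c4, e1]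

/-- value of an idempotent measure on a test function -/
lemma idem_tf {A : Type*} [DecidableEq A] {m : ℕ} (x : Fin (m+1) → A) (α : Fin (m+1) → EReal)
    (hle : ∀ i, α i ≤ 0) (h0 : ∃ i, α i = 0) (p : A) (M : ℝ)
    (hM : 1 + |(fib x α p).toReal| ≤ M) :
    idemOf x α (tf p M) =
      if fib x α p = ⊥ then -M else (fib x α p).toReal + M := by
  set B := fib x α p with hB
  set C := ⨆ i, if x i = p then ⊥ else α i with hC
  have hM0 : (0:ℝ) < M := by have := abs_nonneg (B.toReal); linarith
  have hsupα : (⨆ i, α i) = 0 := by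
    obtain ⟨i0, hi0⟩ := h0
    exact le_antisymm (iSup_le hle) (hi0 ▸ le_iSup α i0)
  have key : (⨆ i, α i + ((tf p M (x i) : ℝ) : EReal))
      = max (B + (M:EReal)) (C + ((-M : ℝ) : EReal)) := by
    rw [hB, hC, fib, iSup_add_real, iSup_add_real, ← iSup_sup_eq]
    refine iSup_congr fun i => ?_
    by_cases hy : x i = p <;> simp [tf, hy, EReal.bot_add]
  have hBC : B ⊔ C = 0 := by
    rw [hB, hC, fib_sup_compl, hsupα]
  have hCle : C ≤ 0 := le_trans le_sup_right hBC.le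
  rw [idemOf, key]
  by_cases hBot : B = ⊥
  · have hCz : C = 0 := by rw [hBot] at hBC; simpa using hBC
    rw [hBot, hCz, if_pos rfl, EReal.bot_add, zero_add]
    simp
  · have hBT : B ≠ ⊤ := by
      intro hT
      have h1 : B ≤ 0 := le_trans le_sup_left hBC.le
      rw [hT] at h1
      exact (by simp : ¬ ((⊤:EReal) ≤ 0)) h1
    have hreal : B = ((B.toReal : ℝ) : EReal) := (EReal.coe_toReal hBT hBot).symm
    set b := B.toReal with hbdef
    have hb : |b| + 1 ≤ M := by linarith
    have h2 : C + ((-M:ℝ):EReal) ≤ ((b + M : ℝ) : EReal) := by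
      calc C + ((-M:ℝ):EReal) ≤ 0 + ((-M:ℝ):EReal) := add_le_add hCle le_rfl
      _ = ((-M:ℝ):EReal) := by rw [zero_add]
      _ ≤ ((b + M : ℝ) : EReal) := by
          have : -M ≤ b + M := by have := neg_abs_le b; linarith
          exact_mod_cast this
    have h1 : B + (M:EReal) = ((b + M : ℝ) : EReal) := by
      rw [hreal]; exact_mod_cast rfl
    rw [h1, max_eq_left h2, if_neg hBot]
    simp [← EReal.coe_add]

/-- coefficients of an idempotent measure are determined by the functional -/
lemma detIdem {A : Type*} [DecidableEq A] {m m' : ℕ} {x : Fin (m+1) → A} {α : Fin (m+1) → EReal}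
    {x' : Fin (m'+1) → A} {α' : Fin (m'+1) → EReal}
    (hle : ∀ i, α i ≤ 0) (h0 : ∃ i, α i = 0) (hle' : ∀ i, α' i ≤ 0) (h0' : ∃ i, α' i = 0)
    (h : idemOf x α = idemOf x' α') (p : A) : fib x α p = fib x' α' p := by
  set B := fib x α p with hB
  set B' := fib x' α' p with hB'
  set M : ℝ := 1 + |B.toReal| + |B'.toReal| + 1 with hMdef
  have hM : 1 + |B.toReal| ≤ M := by have := abs_nonneg (B'.toReal); linarith
  have hM' : 1 + |B'.toReal| ≤ M := by have := abs_nonneg (B.toReal); linarith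
  have hM1 : 1 + |B.toReal| ≤ M + 1 := by linarith
  have hM1' : 1 + |B'.toReal| ≤ M + 1 := by linarith
  have hMpos : (1:ℝ) ≤ M := by
    have := abs_nonneg (B.toReal); have := abs_nonneg (B'.toReal); linarith
  have e1 := idem_tf x α hle h0 p M hM
  have e1' := idem_tf x' α' hle' h0' p M hM'
  have e2 := idem_tf x α hle h0 p (M+1) hM1
  have e2' := idem_tf x' α' hle' h0' p (M+1) hM1'
  rw [h] at e1 e2
  rw [e1'] at e1
  rw [e2'] at e2
  rw [← hB, ← hB'] at e1 e2
  have hBT : B ≠ ⊤ := by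
    intro hT
    have h1 : B ≤ 0 := fib_le _ _ _ _ hle
    rw [hT] at h1
    exact (by simp : ¬ ((⊤:EReal) ≤ 0)) h1
  have hBT' : B' ≠ ⊤ := by
    intro hT
    have h1 : B' ≤ 0 := fib_le _ _ _ _ hle'
    rw [hT] at h1
    exact (by simp : ¬ ((⊤:EReal) ≤ 0)) h1
  by_cases c3 : B = ⊥ <;> by_cases c4 : B' = ⊥
  · rw [c3, c4]
  · exfalso; rw [if_pos c3, if_neg c4] at e1 e2; linarith
  · exfalso; rw [if_pos c4, if_neg c3] at e1 e2; linarith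
  · rw [if_neg c3, if_neg c4] at e1
    have : B.toReal = B'.toReal := by linarith
    rw [← EReal.coe_toReal hBT c3, ← EReal.coe_toReal hBT' c4, this]

/-! ### Discrete ultrametric spaces -/

def Disc (n : ℕ) (R : ℝ) : Type := Fin (n + 1)

instance (n : ℕ) (R : ℝ) : DecidableEq (Disc n R) := instDecidableEqFin (n+1)

instance (n : ℕ) (R : ℝ) : Fintype (Disc n R) := Fin.fintype (n+1)

instance (n : ℕ) (R : ℝ) : MetricSpace (Disc n R) where
  dist a b := if a = b then 0 else max R 1
  dist_self a := by simp
  dist_comm a b := by by_cases h : a = b <;> simp [h, eq_comm]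
  dist_triangle a b c := by
    have h1 : (0:ℝ) ≤ max R 1 := le_trans zero_le_one (le_max_right R 1)
    by_cases hab : a = c
    · subst hab; simp; positivity
    · rw [if_neg hab]
      by_cases h2 : a = b
      · subst h2; rw [if_pos rfl, if_neg hab]; linarith
      · rw [if_neg h2]
        have : (0:ℝ) ≤ if b = c then 0 else max R 1 := by positivity
        linarith
  eq_of_dist_eq_zero := by
    intro a b h
    by_contra hne
    simp only [if_neg hne] at h
    have : (1:ℝ) ≤ max R 1 := le_max_right R 1
    linarith

def en (n : ℕ) (R : ℝ) : Fin (n + 1) → Disc n R := fun i => i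
def de (n : ℕ) (R : ℝ) : Disc n R → Fin (n + 1) := fun i => i

@[simp] lemma de_en (n : ℕ) (R : ℝ) (i : Fin (n+1)) : de n R (en n R i) = i := rfl
@[simp] lemma en_de (n : ℕ) (R : ℝ) (w : Disc n R) : en n R (de n R w) = w := rfl
lemma en_inj {n : ℕ} {R : ℝ} {i j : Fin (n+1)} (h : en n R i = en n R j) : i = j := h
@[simp] lemma en_eq_iff {n : ℕ} {R : ℝ} {i j : Fin (n+1)} : en n R i = en n R j ↔ i = j :=
  ⟨en_inj, fun h => by rw [h]⟩

lemma disc_dist (n : ℕ) (R : ℝ) (a b : Disc n R) :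
    dist a b = if a = b then 0 else max R 1 := rfl

lemma disc_ultra (n : ℕ) (R : ℝ) : IsUltra (Disc n R) := by
  intro a b c
  by_cases hab : a = b
  · subst hab
    rw [disc_dist, if_pos rfl]
    exact le_max_of_le_left dist_nonneg
  · rw [disc_dist, if_neg hab]
    by_cases hac : a = c
    · have hcb : ¬ (c = b) := fun h => hab (hac.trans h)
      rw [disc_dist n R c b, if_neg hcb]
      exact le_max_right _ _
    · refine le_max_of_le_left ?_
      rw [disc_dist, if_neg hac]

lemma disc_nonexp {n m : ℕ} {R : ℝ} (f : Disc n R → Disc m 1) :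
    ∀ p q : Disc n R, dist (f p) (f q) ≤ dist p q := by
  intro p q
  by_cases h : p = q
  · subst h; simp
  · rw [disc_dist n R, if_neg h, disc_dist m 1]
    by_cases hf : f p = f q
    · rw [if_pos hf]; exact le_max_of_le_right zero_le_one
    · rw [if_neg hf]
      simp only [max_self]
      exact le_max_right R 1

lemma normMM {n : ℕ} {R : ℝ} {m : ℕ} (y : Fin (m+1) → Disc n R) (β : Fin (m+1) → EReal) :
    mmOf y β = mmOf (en n R) (fun i => fib y β (en n R i)) := by
  funext φ
  unfold mmOf
  congr 1
  apply le_antisymm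
  · refine iSup_le fun i => ?_
    refine le_trans (min_le_min (le_fib y β i) le_rfl) ?_
    exact le_iSup (fun p => min (fib y β (en n R p)) ((φ (en n R p) : ℝ) : EReal)) (de n R (y i))
  · refine iSup_le fun p => ?_
    show min (fib y β (en n R p)) ((φ (en n R p) : ℝ) : EReal) ≤ ⨆ i, min (β i) ((φ (y i):ℝ):EReal)
    obtain ⟨i0, hi0⟩ := exists_iSup_eq (fun i => if y i = en n R p then β i else ⊥)
    have hfib : fib y β (en n R p) = if y i0 = en n R p then β i0 else ⊥ := hi0
    rw [hfib]
    by_cases hy : y i0 = en n R p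
    · rw [if_pos hy, ← hy]
      exact le_iSup (fun i => min (β i) ((φ (y i) : ℝ) : EReal)) i0
    · rw [if_neg hy]
      exact le_trans (min_le_left _ _) bot_le

lemma normIdem {n : ℕ} {R : ℝ} {m : ℕ} (x : Fin (m+1) → Disc n R) (α : Fin (m+1) → EReal) :
    idemOf x α = idemOf (en n R) (fun i => fib x α (en n R i)) := by
  funext φ
  unfold idemOf
  congr 1
  apply le_antisymm
  · refine iSup_le fun i => ?_
    refine le_trans (add_le_add (le_fib x α i) le_rfl) ?_
    exact le_iSup (fun p => fib x α (en n R p) + ((φ (en n R p) : ℝ) : EReal)) (de n R (x i))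
  · refine iSup_le fun p => ?_
    show fib x α (en n R p) + ((φ (en n R p) : ℝ) : EReal) ≤ ⨆ i, α i + ((φ (x i):ℝ):EReal)
    obtain ⟨i0, hi0⟩ := exists_iSup_eq (fun i => if x i = en n R p then α i else ⊥)
    have hfib : fib x α (en n R p) = if x i0 = en n R p then α i0 else ⊥ := hi0
    rw [hfib]
    by_cases hy : x i0 = en n R p
    · rw [if_pos hy, ← hy]
      exact le_iSup (fun i => α i + ((φ (x i) : ℝ) : EReal)) i0
    · rw [if_neg hy, EReal.bot_add]
      exact bot_le

lemma jmap_mm {A B : Type*} (f : A → B) {m : ℕ} (y : Fin (m+1) → A) (β : Fin (m+1) → EReal) :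
    Jmap f (mmOf y β) = mmOf (fun i => f (y i)) β := rfl

lemma jmap_idem {A B : Type*} (f : A → B) {m : ℕ} (x : Fin (m+1) → A) (α : Fin (m+1) → EReal) :
    Jmap f (idemOf x α) = idemOf (fun i => f (x i)) α := rfl

lemma fib_comp {A B : Type*} [DecidableEq A] [DecidableEq B] (f : A → B) {m : ℕ}
    (y : Fin (m+1) → A) (β : Fin (m+1) → EReal) (q : B) (p : A)
    (hfp : ∀ w, f w = q ↔ w = p) :
    fib (fun i => f (y i)) β q = fib y β p := by
  unfold fib
  exact iSup_congr fun i => by simp only [hfp]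

lemma fib_comp_pair {A B : Type*} [DecidableEq A] [DecidableEq B] (f : A → B) {m : ℕ}
    (y : Fin (m+1) → A) (β : Fin (m+1) → EReal) (q : B) (p p' : A)
    (hfp : ∀ w, f w = q ↔ (w = p ∨ w = p')) :
    fib (fun i => f (y i)) β q = fib y β p ⊔ fib y β p' := by
  unfold fib
  rw [← iSup_sup_eq]
  refine iSup_congr fun i => ?_
  by_cases h1 : y i = p
  · rw [if_pos ((hfp (y i)).mpr (Or.inl h1)), if_pos h1]
    by_cases h2 : y i = p'
    · rw [if_pos h2]; exact (sup_idem _).symm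
    · rw [if_neg h2]; exact (sup_bot_eq _).symm
  · by_cases h2 : y i = p'
    · rw [if_pos ((hfp (y i)).mpr (Or.inr h2)), if_neg h1, if_pos h2]
      exact (bot_sup_eq _).symm
    · rw [if_neg (fun hh => by rcases (hfp (y i)).mp hh with h | h; exacts [h1 h, h2 h]),
        if_neg h1, if_neg h2]
      exact (sup_bot_eq _).symm

lemma fin2_cases (w : Fin 2) : w = 0 ∨ w = 1 := by revert w; decide

lemma disc2_cases (w : Disc 1 1) : w = en 1 1 0 ∨ w = en 1 1 1 := by
  rcases fin2_cases (de 1 1 w) with h | h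
  · left; rw [← en_de 1 1 w, h]
  · right; rw [← en_de 1 1 w, h]

/-! ### The canonical two point measures and collapse maps -/

def ct (t : EReal) : Fin 2 → EReal := fun i => if i = 0 then 0 else t

@[simp] lemma ct_zero (t : EReal) : ct t 0 = 0 := rfl
@[simp] lemma ct_one (t : EReal) : ct t 1 = t := if_neg (by decide)

lemma ct_le {t : EReal} (ht : t ≤ 0) : ∀ i, ct t i ≤ 0 := by
  intro i
  rcases fin2_cases i with rfl | rfl
  · exact le_of_eq (ct_zero t)
  · rw [ct_one]; exact ht

def P2 (t : EReal) : (Disc 1 1 → ℝ) → ℝ := idemOf (en 1 1) (ct t)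

def σ2 : Disc 1 1 → Disc 1 1 := fun w => if de 1 1 w = 0 then en 1 1 1 else en 1 1 0
def q1 : Disc 2 1 → Disc 1 1 := fun w => if de 2 1 w = 2 then en 1 1 1 else en 1 1 0
def q2 : Disc 2 1 → Disc 1 1 := fun w => if de 2 1 w = 0 then en 1 1 0 else en 1 1 1
def q3 : Disc 2 1 → Disc 1 1 := fun w => if de 2 1 w = 1 then en 1 1 1 else en 1 1 0

lemma hσa : ∀ w, σ2 w = en 1 1 1 ↔ w = en 1 1 0 := by decide
lemma hσb : ∀ w, σ2 w = en 1 1 0 ↔ w = en 1 1 1 := by decide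
lemma hq1a : ∀ w, q1 w = en 1 1 1 ↔ w = en 2 1 2 := by decide
lemma hq1b : ∀ w, q1 w = en 1 1 0 ↔ (w = en 2 1 0 ∨ w = en 2 1 1) := by decide
lemma hq2a : ∀ w, q2 w = en 1 1 0 ↔ w = en 2 1 0 := by decide
lemma hq2b : ∀ w, q2 w = en 1 1 1 ↔ (w = en 2 1 1 ∨ w = en 2 1 2) := by decide
lemma hq3a : ∀ w, q3 w = en 1 1 1 ↔ w = en 2 1 1 := by decide
lemma hq3b : ∀ w, q3 w = en 1 1 0 ↔ (w = en 2 1 0 ∨ w = en 2 1 2) := by decide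

lemma fib_en {n : ℕ} {R : ℝ} (g : Fin (n+1) → EReal) (p : Fin (n+1)) :
    fib (en n R) g (en n R p) = g p := by
  unfold fib
  simp only [en_eq_iff]
  exact iSup_single g p

lemma fib_partition2 {m : ℕ} (x : Fin (m+1) → Disc 1 1) (α : Fin (m+1) → EReal) :
    fib x α (en 1 1 0) ⊔ fib x α (en 1 1 1) = ⨆ i, α i := by
  unfold fib
  rw [← iSup_sup_eq]
  refine iSup_congr fun i => ?_
  have hne : (en 1 1 0 : Disc 1 1) ≠ en 1 1 1 := by decide
  rcases disc2_cases (x i) with h | h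
  · rw [h, if_pos rfl, if_neg hne]
    exact sup_bot_eq _
  · rw [h, if_neg (fun hh => hne hh.symm), if_pos rfl]
    exact bot_sup_eq _

lemma jmap_disc2 {n : ℕ} {R : ℝ} {m : ℕ} (f : Disc n R → Disc 1 1) (x : Fin (m+1) → Disc n R)
    (α : Fin (m+1) → EReal) (g : Fin 2 → EReal)
    (h0 : fib (fun i => f (x i)) α (en 1 1 0) = g 0)
    (h1 : fib (fun i => f (x i)) α (en 1 1 1) = g 1) :
    Jmap f (idemOf x α) = idemOf (en 1 1) g := by
  rw [jmap_idem, normIdem]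
  have hg : (fun i => fib (fun i => f (x i)) α (en 1 1 i)) = g := by
    funext i
    rcases fin2_cases i with rfl | rfl
    · exact h0
    · exact h1
  rw [hg]

end Galpha

open Galpha



/-- Every isomorphism `k` of the functors `I_ω` and `J_ω`
(a family of bijective isometries `k_X : I_ω(X) → J_ω(X)` which is natural
with respect to nonexpanding maps of ultrametric spaces) is of the form `g^a`
for some order-preserving bijection `a : [-∞,0] → [-∞,+∞]`. -/
theorem functor_iso_is_galpha
    (k : ∀ (X : Type) [MetricSpace X], ((X → ℝ) → ℝ) → ((X → ℝ) → ℝ))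
    (hbij : ∀ (X : Type) [MetricSpace X], IsUltra X →
      Set.BijOn (k X) {μ | IsIdem μ} {μ | IsMM μ})
    (hiso : ∀ (X : Type) [MetricSpace X], IsUltra X →
      ∀ μ ν, IsIdem μ → IsIdem ν →
        dHatE (eD X) (k X μ) (k X ν) = dHatE (eD X) μ ν)
    (hnat : ∀ (X Y : Type) [MetricSpace X] [MetricSpace Y],
      IsUltra X → IsUltra Y →
      ∀ f : X → Y, (∀ p q : X, dist (f p) (f q) ≤ dist p q) →
      ∀ μ, IsIdem μ → Jmap f (k X μ) = k Y (Jmap f μ)) :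
    ∃ a : EReal → EReal,
      MonotoneOn a {t : EReal | t ≤ 0} ∧
      Set.BijOn a {t : EReal | t ≤ 0} Set.univ ∧
      ∀ (X : Type) [MetricSpace X], IsUltra X →
        ∀ (n : ℕ) (x : Fin (n + 1) → X) (α : Fin (n + 1) → EReal),
          (∀ i, α i ≤ 0) → (∃ i, α i = 0) →
          k X (idemOf x α) = mmOf x (fun i => a (α i)) := by
  classical
  -- Step 0: chosen mm representations of `k (P2 t)` for `t ≤ 0`
  have hPidem : ∀ t : EReal, t ≤ 0 → IsIdem (P2 t) := by
    intro t ht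
    exact ⟨1, en 1 1, ct t, fun _ => trivial, ct_le ht, ⟨0, rfl⟩, rfl⟩
  have hPmm : ∀ t : EReal, ∃ (m : ℕ) (y : Fin (m+1) → Disc 1 1) (β : Fin (m+1) → EReal),
      (∃ i, β i = ⊤) ∧ (t ≤ 0 → k (Disc 1 1) (P2 t) = mmOf y β) := by
    intro t
    by_cases ht : t ≤ 0
    · have hmm := (hbij (Disc 1 1) (disc_ultra 1 1)).mapsTo (hPidem t ht)
      unfold IsMM IsMMOn at hmm
      obtain ⟨m, y, β, -, htop, heq⟩ := hmm
      exact ⟨m, y, β, htop, fun _ => heq⟩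
    · exact ⟨0, fun _ => en 1 1 0, fun _ => ⊤, ⟨0, rfl⟩, fun h => absurd h ht⟩
  choose mk2 yk βk htop hrep using hPmm
  -- the map `a` will be `t ↦ fib (yk t) (βk t) (en 1 1 1)`
  -- generic fact: the two coefficients of `k (P2 t)` have sup ⊤
  have huv : ∀ t : EReal, fib (yk t) (βk t) (en 1 1 0) ⊔ fib (yk t) (βk t) (en 1 1 1) = ⊤ := by
    intro t
    rw [fib_partition2]
    exact iSup_eq_top_of_exists _ (htop t)
  -- Step 1: relations coming from the three point space
  have hrel : ∀ s t : EReal, s ≤ 0 → t ≤ 0 →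
      (fib (yk (s ⊔ t)) (βk (s ⊔ t)) (en 1 1 0) ⊔ fib (yk s) (βk s) (en 1 1 1)
        = fib (yk t) (βk t) (en 1 1 0)) ∧
      (fib (yk s) (βk s) (en 1 1 1) ⊔ fib (yk t) (βk t) (en 1 1 1)
        = fib (yk (s ⊔ t)) (βk (s ⊔ t)) (en 1 1 1)) := by
    intro s t hs ht
    have hst : s ⊔ t ≤ 0 := sup_le hs ht
    set γ : Fin 3 → EReal := fun i => if i = 0 then 0 else if i = 1 then s else t with hγ
    have hγ0 : γ 0 = 0 := rfl
    have hγ1 : γ 1 = s := by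
      rw [hγ]
      dsimp only
      rw [if_neg (by decide : ¬ ((1:Fin 3) = 0)), if_pos rfl]
    have hγ2 : γ 2 = t := by
      rw [hγ]
      dsimp only
      rw [if_neg (by decide : ¬ ((2:Fin 3) = 0)), if_neg (by decide : ¬ ((2:Fin 3) = 1))]
    have hγle : ∀ i, γ i ≤ 0 := by
      intro i
      rw [hγ]
      dsimp only
      split_ifs with h1 h2
      · exact le_rfl
      · exact hs
      · exact ht
    have hidem3 : IsIdem (idemOf (en 2 1) γ) :=
      ⟨2, en 2 1, γ, fun _ => trivial, hγle, ⟨0, hγ0⟩, rfl⟩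
    have hmm3 := (hbij (Disc 2 1) (disc_ultra 2 1)).mapsTo hidem3
    unfold IsMM IsMMOn at hmm3
    obtain ⟨mz, z, δ, -, hδtop, hzrep⟩ := hmm3
    -- pushforward computations
    have fib0 : ∀ (f : Disc 2 1 → Disc 1 1), f (en 2 1 0) = en 1 1 0 →
        fib (fun i => f (en 2 1 i)) γ (en 1 1 0) = 0 := by
      intro f hf
      unfold fib
      refine iSup_eq_c _ 0 (fun j => ?_) ⟨0, ?_⟩
      · split_ifs with h
        · exact hγle j
        · exact bot_le
      · rw [if_pos hf, hγ0]
    have fibsingle : ∀ (f : Disc 2 1 → Disc 1 1) (c : Fin 2) (j0 : Fin 3),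
        (∀ w, f w = en 1 1 c ↔ w = en 2 1 j0) →
        fib (fun i => f (en 2 1 i)) γ (en 1 1 c) = γ j0 := by
      intro f c j0 hcond
      unfold fib
      have hc : ∀ j : Fin 3, ((fun i => f (en 2 1 i)) j = en 1 1 c) = (j = j0) :=
        fun j => propext ((hcond (en 2 1 j)).trans en_eq_iff)
      simp only [hc]
      exact iSup_single γ j0
    have fibpair : ∀ (f : Disc 2 1 → Disc 1 1) (c : Fin 2) (j0 j1 : Fin 3),
        (∀ w, f w = en 1 1 c ↔ (w = en 2 1 j0 ∨ w = en 2 1 j1)) →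
        fib (fun i => f (en 2 1 i)) γ (en 1 1 c) = γ j0 ⊔ γ j1 := by
      intro f c j0 j1 hcond
      unfold fib
      have hc : ∀ j : Fin 3, ((fun i => f (en 2 1 i)) j = en 1 1 c) = (j = j0 ∨ j = j1) :=
        fun j => propext ((hcond (en 2 1 j)).trans (or_congr en_eq_iff en_eq_iff))
      simp only [hc]
      exact iSup_pair γ j0 j1
    -- the map q1 : collapses {0,1}
    have hJ1 : Jmap q1 (idemOf (en 2 1) γ) = P2 t := by
      refine jmap_disc2 q1 (en 2 1) γ (ct t) ?_ ?_
      · rw [ct_zero]; exact fib0 q1 (by decide)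
      · rw [ct_one]; rw [fibsingle q1 1 2 hq1a]; exact hγ2
    have hJ2 : Jmap q2 (idemOf (en 2 1) γ) = P2 (s ⊔ t) := by
      refine jmap_disc2 q2 (en 2 1) γ (ct (s ⊔ t)) ?_ ?_
      · rw [ct_zero]; exact fib0 q2 (by decide)
      · rw [ct_one]; rw [fibpair q2 1 1 2 hq2b, hγ1, hγ2]
    have hJ3 : Jmap q3 (idemOf (en 2 1) γ) = P2 s := by
      refine jmap_disc2 q3 (en 2 1) γ (ct s) ?_ ?_
      · rw [ct_zero]; exact fib0 q3 (by decide)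
      · rw [ct_one]; rw [fibsingle q3 1 1 hq3a]; exact hγ1
    -- naturality for the three maps
    have hn1 := hnat (Disc 2 1) (Disc 1 1) (disc_ultra 2 1) (disc_ultra 1 1) q1
      (disc_nonexp q1) (idemOf (en 2 1) γ) hidem3
    have hn2 := hnat (Disc 2 1) (Disc 1 1) (disc_ultra 2 1) (disc_ultra 1 1) q2
      (disc_nonexp q2) (idemOf (en 2 1) γ) hidem3
    have hn3 := hnat (Disc 2 1) (Disc 1 1) (disc_ultra 2 1) (disc_ultra 1 1) q3
      (disc_nonexp q3) (idemOf (en 2 1) γ) hidem3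
    rw [hJ1, hrep t ht, hzrep, jmap_mm] at hn1
    rw [hJ2, hrep (s ⊔ t) hst, hzrep, jmap_mm] at hn2
    rw [hJ3, hrep s hs, hzrep, jmap_mm] at hn3
    -- extract coefficients
    have d1a := detMM hδtop (htop t) hn1 (en 1 1 1)
    have d1b := detMM hδtop (htop t) hn1 (en 1 1 0)
    have d2a := detMM hδtop (htop (s ⊔ t)) hn2 (en 1 1 0)
    have d2b := detMM hδtop (htop (s ⊔ t)) hn2 (en 1 1 1)
    have d3a := detMM hδtop (htop s) hn3 (en 1 1 0)
    have d3b := detMM hδtop (htop s) hn3 (en 1 1 1)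
    rw [fib_comp q1 z δ (en 1 1 1) (en 2 1 2) hq1a] at d1a
    rw [fib_comp_pair q1 z δ (en 1 1 0) (en 2 1 0) (en 2 1 1) hq1b] at d1b
    rw [fib_comp q2 z δ (en 1 1 0) (en 2 1 0) hq2a] at d2a
    rw [fib_comp_pair q2 z δ (en 1 1 1) (en 2 1 1) (en 2 1 2) hq2b] at d2b
    rw [fib_comp_pair q3 z δ (en 1 1 0) (en 2 1 0) (en 2 1 2) hq3b] at d3a
    rw [fib_comp q3 z δ (en 1 1 1) (en 2 1 1) hq3a] at d3b
    constructor
    · rw [← d2a, ← d3b, ← d1b]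
    · rw [← d3b, ← d1a, ← d2b]
  -- Step 2: `u t = ⊤` for all `t ≤ 0`
  have hutop : ∀ t : EReal, t ≤ 0 → fib (yk t) (βk t) (en 1 1 0) = ⊤ := by
    intro t ht
    have h := (hrel 0 t le_rfl ht).1
    rw [show (0 : EReal) ⊔ t = 0 from sup_of_le_left ht] at h
    rw [← h]
    exact huv 0
  -- Step 3: `v 0 = ⊤`
  have hv0 : fib (yk 0) (βk 0) (en 1 1 1) = ⊤ := by
    have hσP : Jmap σ2 (P2 0) = P2 0 := by
      refine jmap_disc2 σ2 (en 1 1) (ct 0) (ct 0) ?_ ?_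
      · rw [ct_zero]
        rw [fib_comp σ2 (en 1 1) (ct 0) (en 1 1 0) (en 1 1 1) hσb, fib_en]
        exact ct_one 0
      · rw [ct_one]
        rw [fib_comp σ2 (en 1 1) (ct 0) (en 1 1 1) (en 1 1 0) hσa, fib_en]
        exact ct_zero 0
    have hσn := hnat (Disc 1 1) (Disc 1 1) (disc_ultra 1 1) (disc_ultra 1 1) σ2
      (disc_nonexp σ2) (P2 0) (hPidem 0 le_rfl)
    rw [hσP, hrep 0 le_rfl, jmap_mm] at hσn
    have d := detMM (htop 0) (htop 0) hσn (en 1 1 1)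
    rw [fib_comp σ2 (yk 0) (βk 0) (en 1 1 1) (en 1 1 0) hσa] at d
    rw [← d]
    exact hutop 0 le_rfl
  -- Step 4: the main lemma, on arbitrary discrete spaces
  have mainL : ∀ (n : ℕ) (R : ℝ) (α : Fin (n+1) → EReal), (∀ i, α i ≤ 0) → (∃ i, α i = 0) →
      k (Disc n R) (idemOf (en n R) α)
        = mmOf (en n R) (fun i => fib (yk (α i)) (βk (α i)) (en 1 1 1)) := by
    intro n R α hle h0
    have hidem : IsIdem (idemOf (en n R) α) :=
      ⟨n, en n R, α, fun _ => trivial, hle, h0, rfl⟩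
    have hmm := (hbij (Disc n R) (disc_ultra n R)).mapsTo hidem
    unfold IsMM IsMMOn at hmm
    obtain ⟨mz, z, δ, -, hδtop, hzrep⟩ := hmm
    rw [hzrep, normMM z δ]
    have hg : (fun i => fib z δ (en n R i))
        = (fun i => fib (yk (α i)) (βk (α i)) (en 1 1 1)) := by
      funext p
      set fp : Disc n R → Disc 1 1 := fun w => if w = en n R p then en 1 1 1 else en 1 1 0
        with hfpdef
      have hfa : ∀ w, fp w = en 1 1 1 ↔ w = en n R p := by
        intro w
        constructor
        · intro hw
          by_contra hne
          rw [hfpdef] at hw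
          simp only [if_neg hne] at hw
          exact (by decide : (en 1 1 0 : Disc 1 1) ≠ en 1 1 1) hw
        · intro hw; rw [hfpdef]; simp only [if_pos hw]
      have hnp := hnat (Disc n R) (Disc 1 1) (disc_ultra n R) (disc_ultra 1 1) fp
        (disc_nonexp fp) (idemOf (en n R) α) hidem
      have hc1 : fib (fun i => fp (en n R i)) α (en 1 1 1) = α p := by
        unfold fib
        have hcond : ∀ j : Fin (n+1), ((fun i => fp (en n R i)) j = en 1 1 1) = (j = p) :=
          fun j => propext ((hfa (en n R j)).trans en_eq_iff)
        simp only [hcond]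
        exact iSup_single α p
      set c0 : EReal := fib (fun i => fp (en n R i)) α (en 1 1 0) with hc0def
      have hc0le : c0 ≤ 0 := fib_le _ _ _ _ hle
      by_cases hc0 : c0 = 0
      · -- some other coordinate carries coefficient 0
        have hkey : Jmap fp (idemOf (en n R) α) = P2 (α p) := by
          refine jmap_disc2 fp (en n R) α (ct (α p)) ?_ ?_
          · rw [ct_zero, ← hc0def]; exact hc0
          · rw [ct_one]; exact hc1
        rw [hkey, hrep (α p) (hle p), hzrep, jmap_mm] at hnp
        have d := detMM hδtop (htop (α p)) hnp (en 1 1 1)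
        rw [fib_comp fp z δ (en 1 1 1) (en n R p) hfa] at d
        exact d
      · -- `p` is the unique coordinate with coefficient 0
        have hαp : α p = 0 := by
          obtain ⟨i0, hi0⟩ := h0
          by_cases hip : i0 = p
          · rw [← hip]; exact hi0
          · exfalso
            apply hc0
            refine le_antisymm hc0le ?_
            rw [hc0def]
            have hfi0 : fp (en n R i0) = en 1 1 0 := by
              rw [hfpdef]
              simp only [if_neg (fun h => hip (en_inj h))]
            refine le_trans ?_ (le_iSup (fun i =>
              if (fun i => fp (en n R i)) i = en 1 1 0 then α i else ⊥) i0)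
            rw [if_pos hfi0, hi0]
        -- identify the pushforward with `Jmap σ2 (P2 c0)`
        set g : Fin 2 → EReal := fun i => if i = 0 then c0 else 0 with hgdef
        have hg0 : g 0 = c0 := rfl
        have hg1 : g 1 = 0 := by rw [hgdef]; exact if_neg (by decide)
        have lhs1 : Jmap fp (idemOf (en n R) α) = idemOf (en 1 1) g := by
          refine jmap_disc2 fp (en n R) α g ?_ ?_
          · rw [hg0, ← hc0def]
          · rw [hg1, hc1]; exact hαp
        have lhs2 : Jmap σ2 (P2 c0) = idemOf (en 1 1) g := by
          refine jmap_disc2 σ2 (en 1 1) (ct c0) g ?_ ?_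
          · rw [hg0]
            rw [fib_comp σ2 (en 1 1) (ct c0) (en 1 1 0) (en 1 1 1) hσb, fib_en]
            exact ct_one c0
          · rw [hg1]
            rw [fib_comp σ2 (en 1 1) (ct c0) (en 1 1 1) (en 1 1 0) hσa, fib_en]
            exact ct_zero c0
        have hσn := hnat (Disc 1 1) (Disc 1 1) (disc_ultra 1 1) (disc_ultra 1 1) σ2
          (disc_nonexp σ2) (P2 c0) (hPidem c0 hc0le)
        rw [hrep c0 hc0le, jmap_mm, lhs2, ← lhs1, ← hnp, hzrep, jmap_mm] at hσn
        have d := detMM (htop c0) hδtop hσn (en 1 1 1)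
        rw [fib_comp σ2 (yk c0) (βk c0) (en 1 1 1) (en 1 1 0) hσa,
          fib_comp fp z δ (en 1 1 1) (en n R p) hfa] at d
        rw [hαp, hv0, ← d]
        exact hutop c0 hc0le
    rw [hg]
  -- Step 5: monotonicity
  have hmono : MonotoneOn (fun t => fib (yk t) (βk t) (en 1 1 1)) {t : EReal | t ≤ 0} := by
    intro s hs t ht hst
    have h2 := (hrel s t hs ht).2
    rw [show s ⊔ t = t from sup_of_le_right hst] at h2
    exact le_trans le_sup_left h2.le
  -- Step 6: injectivity
  have hinj : Set.InjOn (fun t => fib (yk t) (βk t) (en 1 1 1)) {t : EReal | t ≤ 0} := by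
    intro t1 h1 t2 h2 hv
    simp only at hv
    have e2 : k (Disc 1 1) (P2 t1) = k (Disc 1 1) (P2 t2) := by
      rw [hrep t1 h1, hrep t2 h2, normMM (yk t1) (βk t1), normMM (yk t2) (βk t2)]
      have hg : (fun i => fib (yk t1) (βk t1) (en 1 1 i))
          = (fun i => fib (yk t2) (βk t2) (en 1 1 i)) := by
        funext i
        rcases fin2_cases i with rfl | rfl
        · rw [hutop t1 h1, hutop t2 h2]
        · exact hv
      rw [hg]
    have hP : P2 t1 = P2 t2 :=
      (hbij (Disc 1 1) (disc_ultra 1 1)).injOn (hPidem t1 h1) (hPidem t2 h2) e2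
    unfold P2 at hP
    have d := detIdem (ct_le h1) ⟨0, rfl⟩ (ct_le h2) ⟨0, rfl⟩ hP (en 1 1 1)
    rw [fib_en, fib_en, ct_one, ct_one] at d
    exact d
  -- Step 7: surjectivity
  have hsurj : Set.SurjOn (fun t => fib (yk t) (βk t) (en 1 1 1)) {t : EReal | t ≤ 0}
      Set.univ := by
    intro w _
    set bw : Fin 2 → EReal := fun i => if i = 0 then ⊤ else w with hbwdef
    have hbw0 : bw 0 = ⊤ := rfl
    have hbw1 : bw 1 = w := by rw [hbwdef]; exact if_neg (by decide)
    have hν : IsMM (mmOf (en 1 1) bw) :=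
      ⟨1, en 1 1, bw, fun _ => trivial, ⟨0, hbw0⟩, rfl⟩
    obtain ⟨μ, hμidem, hμeq⟩ := (hbij (Disc 1 1) (disc_ultra 1 1)).surjOn hν
    have hμidem' : IsIdem μ := hμidem
    unfold IsIdem IsIdemOn at hμidem'
    obtain ⟨mx, x, αx, -, hxle, hx0, rfl⟩ := hμidem'
    have hsupαx : (⨆ i, αx i) = 0 := by
      obtain ⟨i0, hi0⟩ := hx0
      exact le_antisymm (iSup_le hxle) (hi0 ▸ le_iSup αx i0)
    have hccle : ∀ i : Fin 2, fib x αx (en 1 1 i) ≤ 0 := fun i => fib_le _ _ _ _ hxle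
    have hpart : fib x αx (en 1 1 0) ⊔ fib x αx (en 1 1 1) = 0 := by
      rw [fib_partition2, hsupαx]
    have hcases : fib x αx (en 1 1 0) = 0 ∨ fib x αx (en 1 1 1) = 0 := by
      rcases le_total (fib x αx (en 1 1 0)) (fib x αx (en 1 1 1)) with hh | hh
      · right; rw [sup_eq_right.mpr hh] at hpart; exact hpart
      · left; rw [sup_eq_left.mpr hh] at hpart; exact hpart
    rcases hcases with hcc | hcc
    · -- μ = P2 (cc 1)
      set t := fib x αx (en 1 1 1) with htdef
      have hμP : idemOf x αx = P2 t := by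
        unfold P2
        rw [normIdem x αx]
        have hg : (fun i => fib x αx (en 1 1 i)) = ct t := by
          funext i
          rcases fin2_cases i with rfl | rfl
          · rw [ct_zero]; exact hcc
          · rw [ct_one]
        rw [hg]
      rw [hμP] at hμeq
      rw [hrep t (hccle 1)] at hμeq
      have d := detMM (htop t) ⟨0, hbw0⟩ hμeq (en 1 1 1)
      rw [fib_en, hbw1] at d
      exact ⟨t, hccle 1, d⟩
    · -- μ = Jmap σ2 (P2 s) with s := cc 0
      set s := fib x αx (en 1 1 0) with hsdef
      set g : Fin 2 → EReal := fun i => if i = 0 then s else 0 with hgdef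
      have hg0 : g 0 = s := rfl
      have hg1 : g 1 = 0 := by rw [hgdef]; exact if_neg (by decide)
      have hμg : idemOf x αx = idemOf (en 1 1) g := by
        rw [normIdem x αx]
        have hgg : (fun i => fib x αx (en 1 1 i)) = g := by
          funext i
          rcases fin2_cases i with rfl | rfl
          · rw [hg0]
          · rw [hg1]; exact hcc
        rw [hgg]
      have lhs2 : Jmap σ2 (P2 s) = idemOf (en 1 1) g := by
        refine jmap_disc2 σ2 (en 1 1) (ct s) g ?_ ?_
        · rw [hg0]
          rw [fib_comp σ2 (en 1 1) (ct s) (en 1 1 0) (en 1 1 1) hσb, fib_en]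
          exact ct_one s
        · rw [hg1]
          rw [fib_comp σ2 (en 1 1) (ct s) (en 1 1 1) (en 1 1 0) hσa, fib_en]
          exact ct_zero s
      have hσn := hnat (Disc 1 1) (Disc 1 1) (disc_ultra 1 1) (disc_ultra 1 1) σ2
        (disc_nonexp σ2) (P2 s) (hPidem s (hccle 0))
      rw [hrep s (hccle 0), jmap_mm, lhs2, ← hμg, hμeq] at hσn
      have d := detMM (htop s) ⟨0, hbw0⟩ hσn (en 1 1 1)
      rw [fib_comp σ2 (yk s) (βk s) (en 1 1 1) (en 1 1 0) hσa, fib_en, hbw1] at d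
      refine ⟨0, ?_, ?_⟩
      · exact le_refl (0:EReal)
      simp only
      rw [hv0, ← d]
      exact (hutop s (hccle 0)).symm
  -- Step 8: conclusion
  refine ⟨fun t => fib (yk t) (βk t) (en 1 1 1), hmono, ⟨fun _ _ => trivial, hinj, hsurj⟩, ?_⟩
  intro X instX hX n x α hle h0
  set R : ℝ := 1 + ∑ i, ∑ j, dist (x i) (x j) with hR
  set f : Disc n R → X := fun w => x (de n R w) with hf
  have hfx : (fun i => f (en n R i)) = x := funext fun i => rfl
  have hfne : ∀ p q : Disc n R, dist (f p) (f q) ≤ dist p q := by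
    intro p q
    by_cases h : p = q
    · rw [h]
      rw [disc_dist n R q q, if_pos rfl, dist_self]
    · rw [disc_dist n R, if_neg h]
      have h1 : dist (x (de n R p)) (x (de n R q)) ≤ ∑ i, ∑ j, dist (x i) (x j) := by
        have ha := Finset.single_le_sum (f := fun j => dist (x (de n R p)) (x j))
          (fun j _ => dist_nonneg) (Finset.mem_univ (de n R q))
        have hb := Finset.single_le_sum (f := fun i => ∑ j, dist (x i) (x j))
          (fun i _ => Finset.sum_nonneg fun j _ => dist_nonneg) (Finset.mem_univ (de n R p))
        exact le_trans ha hb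
      have h2 : dist (f p) (f q) ≤ R := by rw [hR, hf]; dsimp only; linarith
      exact le_trans h2 (le_max_left R 1)
  have hidemd : IsIdem (idemOf (en n R) α) :=
    ⟨n, en n R, α, fun _ => trivial, hle, h0, rfl⟩
  have hnn := hnat (Disc n R) X (disc_ultra n R) hX f hfne (idemOf (en n R) α) hidemd
  rw [mainL n R α hle h0, jmap_mm, jmap_idem] at hnn
  rw [hfx] at hnn
  exact hnn.symm


end
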